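/- Let K be a field of characteristic zero, let α_1, …, α_p ∈ ℕ^r be linearly independent over ℚ, and let G ∈ K⟦u_1, …, u_r, v_1, …, v_s, w_1, …, w_t⟧ with coefficients g_{γδε} (γ ∈ ℕ^r, δ ∈ ℕ^s, ε ∈ ℕ^t). Then the following are equivalent: (a) for every c ∈ ℤ^r with ⟨c, α_j⟩ = 0 for all j = 1, …, p, the K-linear operator X_c determined by coeff_{(γ,δ,ε)}(X_c F) = ⟨c, γ⟩ · coeff_{(γ,δ,ε)}(F) annihilates G, and the formal partial derivative ∂G/∂w_l is zero for every l = 1, …, t; (b) g_{γδε} = 0 whenever ε ≠ 0, and whenever g_{γδ0} ≠ 0 the vector γ lies in the ℚ-linear span of α_1, …, α_p. -/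

import Mathlib

/-- Clearing denominators: for a rational functional there is an integer vector
representing a positive multiple of it. -/
lemma exists_int_vector_clearing (r : ℕ) (q : Fin r → ℚ) :
    ∃ (c : Fin r → ℤ) (d : ℚ), 0 < d ∧ ∀ i, (c i : ℚ) = q i * d := by
  classical
  refine ⟨fun i => (q i).num * ∏ j ∈ Finset.univ.erase i, ((q j).den : ℤ),
    (∏ j, ((q j).den : ℚ)), ?_, ?_⟩
  · exact Finset.prod_pos fun j _ => by positivity
  · intro i
    push_cast
    have h1 : ((q i).num : ℚ) = q i * (q i).den := (Rat.mul_den_eq_num (q i)).symm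
    rw [h1, mul_assoc]
    congr 1
    rw [← Finset.mul_prod_erase Finset.univ (fun j => ((q j).den : ℚ)) (Finset.mem_univ i)]

/-- Characterization of formal algebraic dependence on a monomial morphism: a formal power
series `G ∈ K⟦u,v,w⟧` is annihilated by all the operators `X_c` (for `c ∈ ℤ^r` orthogonal to
the exponents `α_1,…,α_p`) and by all `∂/∂w_l` if and only if its coefficients `g_{γδε}`
vanish for `ε ≠ 0` and the remaining nonzero coefficients have `u`-exponent `γ` in the
`ℚ`-linear span of `α_1,…,α_p`. -/
theorem formal_algebraic_dependence_characterization
    {K : Type*} [Field K] [CharZero K] (p r s t : ℕ)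
    (α : Fin p → Fin r → ℕ)
    (hα : LinearIndependent ℚ fun j : Fin p => fun i : Fin r => (α j i : ℚ))
    (G : MvPowerSeries (Fin r ⊕ Fin s ⊕ Fin t) K) :
    ((∀ c : Fin r → ℤ, (∀ j : Fin p, (∑ i, c i * (α j i : ℤ)) = 0) →
        ∀ σ : (Fin r ⊕ Fin s ⊕ Fin t) →₀ ℕ,
          ((∑ i, c i * (σ (Sum.inl i) : ℤ) : ℤ) : K) * MvPowerSeries.coeff σ G = 0) ∧
      (∀ l : Fin t, ∀ σ : (Fin r ⊕ Fin s ⊕ Fin t) →₀ ℕ,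
        ((σ (Sum.inr (Sum.inr l)) + 1 : ℕ) : K) *
          MvPowerSeries.coeff (σ + Finsupp.single (Sum.inr (Sum.inr l)) 1) G = 0))
    ↔ (∀ σ : (Fin r ⊕ Fin s ⊕ Fin t) →₀ ℕ, MvPowerSeries.coeff σ G ≠ 0 →
        (∀ l : Fin t, σ (Sum.inr (Sum.inr l)) = 0) ∧
        (fun i : Fin r => (σ (Sum.inl i) : ℚ)) ∈
          Submodule.span ℚ
            (Set.range fun j : Fin p => fun i : Fin r => (α j i : ℚ))) := by
  classical
  constructor
  · rintro ⟨h1, h2⟩ σ hσ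
    constructor
    · -- ε = 0 part
      intro l
      by_contra hne
      have hpos : 1 ≤ σ (Sum.inr (Sum.inr l)) := Nat.one_le_iff_ne_zero.mpr hne
      set σ' : (Fin r ⊕ Fin s ⊕ Fin t) →₀ ℕ :=
        σ - Finsupp.single (Sum.inr (Sum.inr l)) 1 with hσ'
      have hadd : σ' + Finsupp.single (Sum.inr (Sum.inr l)) 1 = σ := by
        ext x
        simp only [Finsupp.add_apply, hσ', Finsupp.tsub_apply]
        rcases eq_or_ne x (Sum.inr (Sum.inr l)) with h | h
        · subst h; simp; omega
        · simp [Finsupp.single_apply, Ne.symm h]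
      have := h2 l σ'
      rw [hadd] at this
      rcases mul_eq_zero.mp this with h | h
      · exact (Nat.cast_ne_zero (R := K)).mpr (Nat.succ_ne_zero _) h
      · exact hσ h
    · -- span part
      by_contra hmem
      obtain ⟨f, hf1, hf2⟩ := Submodule.exists_dual_map_eq_bot_of_notMem hmem inferInstance
      set q : Fin r → ℚ := fun i => f (fun j => if i = j then 1 else 0) with hq
      obtain ⟨c, d, hd, hc⟩ := exists_int_vector_clearing r q
      have hfapp : ∀ x : Fin r → ℚ, f x = ∑ i, x i * q i := by
        intro x
        rw [LinearMap.pi_apply_eq_sum_univ f x]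
        simp [hq, smul_eq_mul]
      have hforth : ∀ j : Fin p, (∑ i, c i * (α j i : ℤ)) = 0 := by
        intro j
        have hα0 : f (fun i : Fin r => (α j i : ℚ)) = 0 := by
          have : f (fun i : Fin r => (α j i : ℚ)) ∈ Submodule.map f
              (Submodule.span ℚ (Set.range fun j : Fin p => fun i : Fin r => (α j i : ℚ))) :=
            Submodule.mem_map_of_mem (Submodule.subset_span ⟨j, rfl⟩)
          rwa [hf2, Submodule.mem_bot] at this
        have : ((∑ i, c i * (α j i : ℤ) : ℤ) : ℚ) = d * f (fun i : Fin r => (α j i : ℚ)) := by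
          rw [hfapp]
          push_cast
          rw [Finset.mul_sum]
          exact Finset.sum_congr rfl fun i _ => by rw [hc i]; ring
        rw [hα0, mul_zero] at this
        exact_mod_cast this
      have hkey := h1 c hforth σ
      rcases mul_eq_zero.mp hkey with h | h
      · have hz : (∑ i, c i * (σ (Sum.inl i) : ℤ)) = 0 := by
          exact_mod_cast h
        have : ((∑ i, c i * (σ (Sum.inl i) : ℤ) : ℤ) : ℚ)
            = d * f (fun i : Fin r => (σ (Sum.inl i) : ℚ)) := by
          rw [hfapp]
          push_cast
          rw [Finset.mul_sum]
          exact Finset.sum_congr rfl fun i _ => by rw [hc i]; ring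
        rw [hz] at this
        have := (mul_eq_zero.mp this.symm).resolve_left (ne_of_gt hd)
        exact hf1 this
      · exact hσ h
  · intro h
    constructor
    · intro c hc σ
      rcases eq_or_ne (MvPowerSeries.coeff σ G) 0 with h0 | h0
      · rw [h0, mul_zero]
      · have hmem := (h σ h0).2
        -- the functional x ↦ ∑ c i * x i vanishes on the span
        let f : (Fin r → ℚ) →ₗ[ℚ] ℚ :=
          { toFun := fun x => ∑ i, (c i : ℚ) * x i
            map_add' := fun x y => by
              simp [mul_add, Finset.sum_add_distrib]
            map_smul' := fun m x => by
              simp [Finset.mul_sum, smul_eq_mul, mul_left_comm] }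
        have hfz : f (fun i : Fin r => (σ (Sum.inl i) : ℚ)) = 0 := by
          have : ∀ x ∈ Submodule.span ℚ
              (Set.range fun j : Fin p => fun i : Fin r => (α j i : ℚ)), f x = 0 := by
            intro x hx
            refine Submodule.span_induction ?_ ?_ ?_ ?_ hx
            · rintro _ ⟨j, rfl⟩
              have := hc j
              have : ((∑ i, c i * (α j i : ℤ) : ℤ) : ℚ) = 0 := by exact_mod_cast this
              simpa [f] using this
            · simp
            · intro x y _ _ hx hy; rw [map_add, hx, hy, add_zero]
            · intro a x _ hx; rw [map_smul, hx, smul_zero]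
          exact this _ hmem
        have : ((∑ i, c i * (σ (Sum.inl i) : ℤ) : ℤ) : ℚ) = 0 := by
          push_cast
          simpa [f] using hfz
        have : (∑ i, c i * (σ (Sum.inl i) : ℤ)) = 0 := by exact_mod_cast this
        rw [this]
        simp
    · intro l σ
      rcases eq_or_ne (MvPowerSeries.coeff
          (σ + Finsupp.single (Sum.inr (Sum.inr l)) 1) G) 0 with h0 | h0
      · rw [h0, mul_zero]
      · exfalso
        have := (h _ h0).1 l
        simp [Finsupp.add_apply] at this
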